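/- Let H = (V,E) and H' = (V,E') be unweighted undirected graphs on the same finite vertex set with E ⊆ E', with H connected, and let s ∈ V. If there exists a node y with d_H(y,s) ≥ d_{H'}(y,s) + δ for some integer δ ≥ 1, then Σ_{x∈V} d_H(x,s) ≥ Σ_{x∈V} d_{H'}(x,s) + Ω(δ²); concretely, Σ_{x∈V} d_H(x,s) ≥ Σ_{x∈V} d_{H'}(x,s) + δ⌊δ/2⌋ − ⌊δ/2⌋(⌊δ/2⌋+1). -/

import Mathlib

open SimpleGraph Finset

lemma myLength_drop {V : Type*} {G : SimpleGraph V} :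
    ∀ {u v : V} (p : G.Walk u v) (n : ℕ), (p.drop n).length = p.length - n := by
  intro u v p
  induction p with
  | nil => intro n; cases n <;> simp [SimpleGraph.Walk.drop]
  | cons h q ih =>
    intro n
    cases n with
    | zero => simp [SimpleGraph.Walk.drop]
    | succ n => simp [SimpleGraph.Walk.drop, ih n]

lemma myExists_take {V : Type*} {G : SimpleGraph V} :
    ∀ {u v : V} (p : G.Walk u v) (n : ℕ), ∃ q : G.Walk u (p.getVert n), q.length ≤ n := by
  intro u v p
  induction p with
  | nil =>
    intro n
    exact ⟨SimpleGraph.Walk.nil.copy rfl (by cases n <;> rfl), by simp⟩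
  | cons h q ih =>
    intro n
    cases n with
    | zero => exact ⟨SimpleGraph.Walk.nil.copy rfl rfl, le_of_eq rfl⟩
    | succ n =>
      obtain ⟨w, hw⟩ := ih n
      exact ⟨(w.cons h).copy rfl (SimpleGraph.Walk.getVert_cons_succ _ h).symm,
        by simpa using Nat.succ_le_succ hw⟩

lemma myDist_getVert_le {V : Type*} {G : SimpleGraph V} {u v : V} (p : G.Walk u v) (n : ℕ) :
    G.dist u (p.getVert n) ≤ n := by
  obtain ⟨q, hq⟩ := myExists_take p n
  exact le_trans (SimpleGraph.dist_le q) hq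

/-- If some node's distance to `s` is larger in `H` than in `H' ⊇ H` by at
least `δ ≥ 1`, then the total sum of distances to `s` is larger by at least
`δ⌊δ/2⌋ − ⌊δ/2⌋(⌊δ/2⌋+1)` (stated additively to avoid truncated subtraction). -/
theorem stmt1 {V : Type*} [Fintype V] (H H' : SimpleGraph V) (hle : H ≤ H')
    (hconn : H.Connected) (s y : V) (δ : ℕ) (hδ : 1 ≤ δ)
    (hy : H.dist y s ≥ H'.dist y s + δ) :
    (∑ x : V, H.dist x s) + (δ / 2) * (δ / 2 + 1) ≥
      (∑ x : V, H'.dist x s) + δ * (δ / 2) := by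
  classical
  have hconn' : H'.Connected := hconn.mono hle
  set k := δ / 2 with hk
  obtain ⟨p, hp⟩ := (hconn y s).exists_walk_length_eq_dist
  set f : ℕ → V := fun i => p.getVert i with hf
  -- k ≤ dist
  have hkδ : k ≤ δ := Nat.div_le_self _ _
  have hkdist : k ≤ H.dist y s := le_trans hkδ (le_trans (Nat.le_add_left _ _) hy)
  -- exact distance of f i
  have hd1 : ∀ i, i ≤ k → H.dist (f i) s + i = H.dist y s := by
    intro i hi
    have hup : H.dist (f i) s ≤ p.length - i := by
      have := SimpleGraph.dist_le (p.drop i)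
      rwa [myLength_drop] at this
    have hle1 : H.dist (f i) s + i ≤ H.dist y s := by
      have : i ≤ p.length := by omega
      omega
    have hlo : H.dist y s ≤ H.dist y (f i) + H.dist (f i) s :=
      hconn.dist_triangle
    have : H.dist y (f i) ≤ i := myDist_getVert_le p i
    omega
  -- H' distance of f i
  have hd2 : ∀ i, H'.dist (f i) s ≤ i + H'.dist y s := by
    intro i
    have h1 : H'.dist (f i) y ≤ i := by
      have h2 : H'.dist (f i) y ≤ H.dist (f i) y :=
        SimpleGraph.Reachable.dist_anti hle (hconn (f i) y)
      have h3 : H.dist (f i) y ≤ i := by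
        rw [SimpleGraph.dist_comm]; exact myDist_getVert_le p i
      omega
    calc H'.dist (f i) s ≤ H'.dist (f i) y + H'.dist y s := hconn'.dist_triangle
      _ ≤ i + H'.dist y s := by omega
  -- pointwise nonneg
  have hpt : ∀ x : V, H'.dist x s ≤ H.dist x s := fun x =>
    SimpleGraph.Reachable.dist_anti hle (hconn x s)
  -- injectivity on range k
  have hinj : Set.InjOn f (Finset.range k) := by
    intro i hi j hj hij
    simp only [Finset.coe_range, Set.mem_Iio] at hi hj
    have e1 := hd1 i (le_of_lt hi)
    have e2 := hd1 j (le_of_lt hj)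
    rw [hij] at e1
    omega
  -- sum over image
  have hsub : ∑ i ∈ Finset.range k, ((H.dist (f i) s : ℤ) - H'.dist (f i) s) ≤
      ∑ x : V, ((H.dist x s : ℤ) - H'.dist x s) := by
    have himg := Finset.sum_image (s := Finset.range k) (g := f)
      (f := fun x => ((H.dist x s : ℤ) - H'.dist x s)) (fun a ha b hb => hinj ha hb)
    rw [← himg]
    apply Finset.sum_le_sum_of_subset_of_nonneg (Finset.subset_univ _)
    intro x _ _
    have := hpt x
    omega
  -- lower bound each term
  have hterm : ∀ i ∈ Finset.range k,
      (δ : ℤ) - 2 * i ≤ (H.dist (f i) s : ℤ) - H'.dist (f i) s := by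
    intro i hi
    rw [Finset.mem_range] at hi
    have e1 := hd1 i (le_of_lt hi)
    have e2 := hd2 i
    have : (H'.dist y s : ℤ) + δ ≤ H.dist y s := by exact_mod_cast hy
    have c1 : (H.dist (f i) s : ℤ) + i = H.dist y s := by exact_mod_cast e1
    have c2 : (H'.dist (f i) s : ℤ) ≤ i + H'.dist y s := by exact_mod_cast e2
    linarith
  have hgauss : (2 : ℤ) * ∑ i ∈ Finset.range k, (i : ℤ) = k * k - k := by
    induction k with
    | zero => simp
    | succ n ih =>
      rw [Finset.sum_range_succ, mul_add]
      push_cast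
      ring_nf
      ring_nf at ih
      linarith
  have hsum : (k : ℤ) * δ - k * (k - 1) ≤
      ∑ i ∈ Finset.range k, ((H.dist (f i) s : ℤ) - H'.dist (f i) s) := by
    calc (k : ℤ) * δ - k * (k - 1)
        = ∑ i ∈ Finset.range k, ((δ : ℤ) - 2 * i) := by
          rw [Finset.sum_sub_distrib, ← Finset.mul_sum]
          simp only [Finset.sum_const, Finset.card_range, nsmul_eq_mul]
          linarith
      _ ≤ _ := Finset.sum_le_sum hterm
  -- finish
  have hfin : (k : ℤ) * δ - k * (k - 1) ≤
      (∑ x : V, (H.dist x s : ℤ)) - ∑ x : V, (H'.dist x s : ℤ) := by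
    calc (k : ℤ) * δ - k * (k - 1) ≤ _ := le_trans hsum hsub
      _ = _ := by rw [Finset.sum_sub_distrib]
  have hcast : ((∑ x : V, H.dist x s : ℕ) : ℤ) + k * (k + 1) ≥
      ((∑ x : V, H'.dist x s : ℕ) : ℤ) + δ * k := by
    push_cast
    have hknn : (0 : ℤ) ≤ k := Nat.cast_nonneg k
    nlinarith [hfin]
  exact_mod_cast hcast
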